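/- Fix s ≥ 0, and let g be the sequence taking value m + 1 exactly s + m + 1 times for each m ≥ 0 (with one extra leading 1), i.e., the solution of g(n) = g(n − s − g(n−1)) + 1. Then for all n ≥ 1, g(n) = ⌊(⌊√(8(n + s(s+1)/2))⌋ + 1)/2⌋ − s. -/

import Mathlib

def golombThresh (j s m : ℕ) : ℕ := 1 + ∑ i ∈ Finset.range m, (s + i * j + 1)

def golombW (j s n : ℕ) : ℕ :=
  j * Nat.findGreatest (fun m => golombThresh j s m ≤ n) n + 1

lemma sqrt_tri (N k : ℕ) (h1 : (k + 1) * k < 2 * N) (h2 : 2 * N ≤ (k + 1) * (k + 2)) :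
    (Nat.sqrt (8 * N) + 1) / 2 = k + 1 := by
  have lb : 2 * k + 1 ≤ Nat.sqrt (8 * N) := by
    rw [Nat.le_sqrt]; nlinarith
  have ub : Nat.sqrt (8 * N) < 2 * k + 3 := by
    rw [Nat.sqrt_lt]; nlinarith
  omega

lemma thresh_double (s m : ℕ) : 2 * golombThresh 1 s m = 2 + m * (2 * s + m + 1) := by
  induction m with
  | zero => simp [golombThresh]
  | succ k ih =>
    have h : golombThresh 1 s (k + 1) = golombThresh 1 s k + (s + k + 1) := by
      simp [golombThresh, Finset.sum_range_succ]; ring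
    rw [h, Nat.mul_add, ih]; ring

lemma thresh_lb (s m : ℕ) : m + 1 ≤ golombThresh 1 s m := by
  have h := thresh_double s m
  have h2 : m * 2 ≤ m * (2 * s + m + 1) := by
    rcases m with _ | m
    · simp
    · exact Nat.mul_le_mul (le_refl (m + 1)) (by omega)
  linarith

/-- Closed form in the case `j = 1`: `g(n) = ⌊(⌊√(8(n + s(s+1)/2))⌋ + 1)/2⌋ − s`. -/
theorem golombW_j_one_closed_form (s : ℕ) :
    ∀ n, 1 ≤ n →
      golombW 1 s n = (Nat.sqrt (8 * (n + s * (s + 1) / 2)) + 1) / 2 - s := by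
  intro n hn
  set P : ℕ → Prop := fun m => golombThresh 1 s m ≤ n with hPdef
  set M := Nat.findGreatest P n with hM
  have hP0 : P 0 := by simpa [hPdef, golombThresh] using hn
  have hPM : P M := Nat.findGreatest_spec (Nat.zero_le n) hP0
  have hnot : ¬ P (M + 1) := by
    by_cases h : M + 1 ≤ n
    · exact Nat.findGreatest_is_greatest (Nat.lt_succ_self M) h
    · intro hc
      have := thresh_lb s (M + 1)
      simp only [hPdef] at hc
      omega
  clear_value M
  have h1 : 2 + M * (2 * s + M + 1) ≤ 2 * n := by
    have := thresh_double s M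
    have hle : golombThresh 1 s M ≤ n := hPM
    omega
  have h2 : 2 * n ≤ (M + 1) * (2 * s + (M + 1) + 1) := by
    have hd := thresh_double s (M + 1)
    have hgt : n + 1 ≤ golombThresh 1 s (M + 1) := by
      have : ¬ golombThresh 1 s (M + 1) ≤ n := hnot
      omega
    linarith
  have hNeven : s * (s + 1) / 2 * 2 = s * (s + 1) :=
    Nat.div_mul_cancel (even_iff_two_dvd.mp (Nat.even_mul_succ_self s))
  set N := n + s * (s + 1) / 2 with hN
  clear_value N
  have h2N : 2 * N = 2 * n + s * (s + 1) := by omega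
  have e1 : (s + M + 1) * (s + M) = s * (s + 1) + M * (2 * s + M + 1) := by ring
  have e2 : (s + M + 1) * (s + M + 2) = s * (s + 1) + (M + 1) * (2 * s + (M + 1) + 1) := by
    ring
  have hsq : (Nat.sqrt (8 * N) + 1) / 2 = (s + M) + 1 :=
    sqrt_tri N (s + M) (by rw [e1, h2N]; linarith) (by rw [e2, h2N]; linarith)
  rw [hsq]
  show 1 * Nat.findGreatest P n + 1 = (s + M) + 1 - s
  omega
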